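/- Given constants D > 0 and κ_a > 0, define φ(τ) = κ_a/√(πDτ) − (κ_a²/D)·erfcx(κ_a·√(τ/D)) for τ > 0. Then φ is integrable on (0,∞) and ∫_0^∞ φ(τ) dτ = 1; i.e., φ is a probability density on (0,∞). -/

import Mathlib

open Real MeasureTheory Set

/-- The complementary error function `erfc x = (2/√π) ∫_x^∞ e^{-t²} dt`. -/
noncomputable def erfc (x : ℝ) : ℝ := (2 / Real.sqrt π) * ∫ t in Set.Ioi x, Real.exp (-t ^ 2)

/-- The scaled complementary error function `erfcx x = e^{x²} erfc x`. -/
noncomputable def erfcx (x : ℝ) : ℝ := Real.exp (x ^ 2) * erfc x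

/-- The first-adsorption-time density
`φ(τ) = κ_a/√(πDτ) − (κ_a²/D) erfcx(κ_a √(τ/D))`. -/
noncomputable def phi (D κa τ : ℝ) : ℝ :=
  κa / Real.sqrt (π * D * τ) - (κa ^ 2 / D) * erfcx (κa * Real.sqrt (τ / D))

open Filter Topology

lemma gauss_integrable : Integrable (fun t : ℝ => Real.exp (-t ^ 2)) := by
  simpa using integrable_exp_neg_mul_sq one_pos

lemma gauss_cont : Continuous (fun t : ℝ => Real.exp (-t ^ 2)) := by
  continuity

lemma intIoi_eq (x : ℝ) :
    (∫ t in Set.Ioi x, Real.exp (-t ^ 2)) =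
      (∫ t in Set.Ioi (0:ℝ), Real.exp (-t ^ 2)) - ∫ t in (0:ℝ)..x, Real.exp (-t ^ 2) := by
  have h : ∀ a : ℝ, (∫ t in Set.Ioi a, Real.exp (-t ^ 2)) =
      (∫ t : ℝ, Real.exp (-t ^ 2)) - ∫ t in Set.Iic a, Real.exp (-t ^ 2) := by
    intro a
    have h2 := integral_add_compl (measurableSet_Iic (a := a)) gauss_integrable
    rw [Set.compl_Iic] at h2
    linarith
  rw [h x, h 0, ← intervalIntegral.integral_Iic_sub_Iic gauss_integrable.integrableOn
    gauss_integrable.integrableOn]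
  ring

lemma hasDerivAt_erfc (x : ℝ) :
    HasDerivAt erfc (-((2 / Real.sqrt π) * Real.exp (-x ^ 2))) x := by
  have h1 : HasDerivAt (fun u : ℝ => ∫ t in (0:ℝ)..u, Real.exp (-t ^ 2))
      (Real.exp (-x ^ 2)) x :=
    intervalIntegral.integral_hasDerivAt_right gauss_integrable.intervalIntegrable
      (gauss_cont.stronglyMeasurableAtFilter _ _) gauss_cont.continuousAt
  have h2 : HasDerivAt (fun u : ℝ => (2 / Real.sqrt π) *
      ((∫ t in Set.Ioi (0:ℝ), Real.exp (-t ^ 2)) - ∫ t in (0:ℝ)..u, Real.exp (-t ^ 2)))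
      (-((2 / Real.sqrt π) * Real.exp (-x ^ 2))) x := by
    have := ((hasDerivAt_const x (∫ t in Set.Ioi (0:ℝ), Real.exp (-t ^ 2))).fun_sub h1).const_mul
      (2 / Real.sqrt π)
    refine this.congr_deriv ?_
    ring
  refine h2.congr_of_eventuallyEq ?_
  filter_upwards with u
  rw [erfc, intIoi_eq u]

lemma erfc_continuous : Continuous erfc :=
  continuous_iff_continuousAt.mpr fun x => (hasDerivAt_erfc x).continuousAt

lemma erfc_zero : erfc 0 = 1 := by
  have h : (∫ t in Set.Ioi (0:ℝ), Real.exp (-t ^ 2)) = Real.sqrt π / 2 := by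
    simpa using integral_gaussian_Ioi 1
  have hπ : Real.sqrt π ≠ 0 := ne_of_gt (Real.sqrt_pos.mpr Real.pi_pos)
  rw [erfc, h]
  field_simp

lemma erfcx_zero : erfcx 0 = 1 := by
  simp [erfcx, erfc_zero]

lemma hasDerivAt_erfcx (x : ℝ) :
    HasDerivAt erfcx (2 * x * erfcx x - 2 / Real.sqrt π) x := by
  have hp : HasDerivAt (fun u : ℝ => u ^ 2) (2 * x) x := by
    simpa using hasDerivAt_pow 2 x
  have h1 : HasDerivAt (fun u : ℝ => Real.exp (u ^ 2)) (Real.exp (x ^ 2) * (2 * x)) x := hp.exp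
  have h := h1.mul (hasDerivAt_erfc x)
  have e : Real.exp (x ^ 2) * Real.exp (-x ^ 2) = 1 := by
    rw [← Real.exp_add]; simp
  have hval : Real.exp (x ^ 2) * (2 * x) * erfc x +
      Real.exp (x ^ 2) * -(2 / Real.sqrt π * Real.exp (-x ^ 2)) =
      2 * x * erfcx x - 2 / Real.sqrt π := by
    unfold erfcx
    linear_combination (-(2 / Real.sqrt π)) * e
  exact hval ▸ h

lemma erfcx_continuous : Continuous erfcx :=
  ((Real.continuous_exp.comp (continuous_pow 2))).mul erfc_continuous

lemma erfc_nonneg (x : ℝ) : 0 ≤ erfc x :=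
  mul_nonneg (by positivity)
    (setIntegral_nonneg measurableSet_Ioi fun t _ => (Real.exp_pos _).le)

lemma erfcx_nonneg (x : ℝ) : 0 ≤ erfcx x :=
  mul_nonneg (Real.exp_pos _).le (erfc_nonneg x)

lemma integral_t_exp (x : ℝ) (hx : 0 < x) :
    IntegrableOn (fun t : ℝ => t * Real.exp (-t ^ 2)) (Set.Ioi x) ∧
    (∫ t in Set.Ioi x, t * Real.exp (-t ^ 2)) = Real.exp (-x ^ 2) / 2 := by
  have hF : ∀ y ∈ Set.Ici x, HasDerivAt (fun t : ℝ => -Real.exp (-t ^ 2) / 2)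
      (y * Real.exp (-y ^ 2)) y := by
    intro y _
    have hp : HasDerivAt (fun t : ℝ => -t ^ 2) (-(2 * y)) y := by
      simpa using (hasDerivAt_pow 2 y).fun_neg
    have h2 := (hp.exp.fun_neg).div_const 2
    refine h2.congr_deriv ?_
    ring
  have hpos : ∀ y ∈ Set.Ioi x, 0 ≤ y * Real.exp (-y ^ 2) := fun y hy =>
    mul_nonneg (le_of_lt (hx.trans hy)) (Real.exp_pos _).le
  have hT : Tendsto (fun t : ℝ => -Real.exp (-t ^ 2) / 2) atTop (𝓝 0) := by
    have h1 : Tendsto (fun t : ℝ => -t ^ 2) atTop atBot :=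
      tendsto_neg_atTop_atBot.comp (tendsto_pow_atTop two_ne_zero)
    have h2 := (Real.tendsto_exp_atBot.comp h1).neg.div_const 2
    simpa using h2
  refine ⟨integrableOn_Ioi_deriv_of_nonneg' hF hpos hT, ?_⟩
  have := integral_Ioi_of_hasDerivAt_of_nonneg' hF hpos hT
  rw [this]
  ring

lemma erfc_le (x : ℝ) (hx : 0 < x) : erfc x ≤ Real.exp (-x ^ 2) / (Real.sqrt π * x) := by
  obtain ⟨hInt, hVal⟩ := integral_t_exp x hx
  have hInt2 : IntegrableOn (fun t : ℝ => t / x * Real.exp (-t ^ 2)) (Set.Ioi x) := by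
    simpa only [div_mul_eq_mul_div, IntegrableOn] using hInt.div_const x
  have hmono : (∫ t in Set.Ioi x, Real.exp (-t ^ 2)) ≤
      ∫ t in Set.Ioi x, t / x * Real.exp (-t ^ 2) := by
    refine setIntegral_mono_on gauss_integrable.integrableOn hInt2 measurableSet_Ioi ?_
    intro t ht
    have h1 : (1:ℝ) ≤ t / x := (one_le_div hx).mpr (le_of_lt ht)
    calc Real.exp (-t ^ 2) = 1 * Real.exp (-t ^ 2) := (one_mul _).symm
      _ ≤ t / x * Real.exp (-t ^ 2) := by
          exact mul_le_mul_of_nonneg_right h1 (Real.exp_pos _).le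
  have hval2 : (∫ t in Set.Ioi x, t / x * Real.exp (-t ^ 2)) =
      Real.exp (-x ^ 2) / (2 * x) := by
    simp only [div_mul_eq_mul_div]
    rw [integral_div, hVal]
    ring
  have hπ : 0 < Real.sqrt π := Real.sqrt_pos.mpr Real.pi_pos
  have h := mul_le_mul_of_nonneg_left (hmono.trans_eq hval2)
    (by positivity : (0:ℝ) ≤ 2 / Real.sqrt π)
  rw [erfc]
  refine h.trans_eq ?_
  field_simp

lemma erfcx_le (x : ℝ) (hx : 0 < x) : erfcx x ≤ (Real.sqrt π * x)⁻¹ := by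
  have h := erfc_le x hx
  have h2 := mul_le_mul_of_nonneg_left h (Real.exp_pos (x ^ 2)).le
  rw [erfcx]
  refine h2.trans_eq ?_
  rw [← mul_div_assoc, ← Real.exp_add]
  simp [one_div]

lemma tendsto_erfcx : Tendsto erfcx atTop (𝓝 0) := by
  have h1 : Tendsto (fun x : ℝ => Real.sqrt π * x) atTop atTop :=
    tendsto_id.const_mul_atTop (Real.sqrt_pos.mpr Real.pi_pos)
  have h0 : Tendsto (fun x : ℝ => (Real.sqrt π * x)⁻¹) atTop (𝓝 0) :=
    tendsto_inv_atTop_zero.comp h1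
  refine tendsto_of_tendsto_of_tendsto_of_le_of_le' tendsto_const_nhds h0 ?_ ?_
  · filter_upwards with x using erfcx_nonneg x
  · filter_upwards [eventually_gt_atTop 0] with x hx using erfcx_le x hx

lemma tendsto_sqrt_atTop : Tendsto Real.sqrt atTop atTop := by
  refine tendsto_atTop_atTop.mpr fun b => ⟨b ^ 2, fun x hx => ?_⟩
  calc b ≤ |b| := le_abs_self b
    _ = Real.sqrt (b ^ 2) := (Real.sqrt_sq_eq_abs b).symm
    _ ≤ Real.sqrt x := Real.sqrt_le_sqrt hx

/-- `φ` is integrable on `(0,∞)` with total integral `1`,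
i.e., `φ` is a probability density on `(0,∞)`. -/
theorem phi_integral_Ioi (D κa : ℝ) (hD : 0 < D) (hκa : 0 < κa) :
    IntegrableOn (phi D κa) (Set.Ioi 0) ∧
      ∫ τ in Set.Ioi (0 : ℝ), phi D κa τ = 1 := by
  have hπ : 0 < Real.sqrt π := Real.sqrt_pos.mpr Real.pi_pos
  set g : ℝ → ℝ := fun τ => -erfcx (κa * Real.sqrt (τ / D)) with hgdef
  have hgcont : Continuous g := by
    exact (erfcx_continuous.comp
      ((continuous_const.mul (Real.continuous_sqrt.comp (continuous_id.div_const D))))).neg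
  -- key sqrt identity
  have key : ∀ τ : ℝ, 0 < τ →
      Real.sqrt (π * D * τ) = Real.sqrt π * (Real.sqrt (τ / D) * D) := by
    intro τ hτ
    have h1 : Real.sqrt (τ / D) = Real.sqrt τ / Real.sqrt D := Real.sqrt_div hτ.le D
    have h2 : Real.sqrt D * Real.sqrt D = D := Real.mul_self_sqrt hD.le
    have hsD : (0:ℝ) < Real.sqrt D := Real.sqrt_pos.mpr hD
    rw [h1, Real.sqrt_mul (by positivity : (0:ℝ) ≤ π * D), Real.sqrt_mul Real.pi_pos.le]
    field_simp
    linear_combination h2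
  have hderiv : ∀ τ ∈ Set.Ioi (0:ℝ), HasDerivAt g (phi D κa τ) τ := by
    intro τ hτ
    have hτ0 : 0 < τ := hτ
    have hsD : 0 < τ / D := div_pos hτ0 hD
    set s := Real.sqrt (τ / D) with hs
    have hs0 : 0 < s := Real.sqrt_pos.mpr hsD
    have h1 : HasDerivAt (fun t : ℝ => t / D) (1 / D) τ := by
      simpa using (hasDerivAt_id τ).div_const D
    have hsq : HasDerivAt (fun t : ℝ => Real.sqrt (t / D)) (1 / (2 * s) * (1 / D)) τ :=
      (Real.hasDerivAt_sqrt (ne_of_gt hsD)).comp τ h1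
    have hu : HasDerivAt (fun t : ℝ => κa * Real.sqrt (t / D)) (κa * (1 / (2 * s) * (1 / D))) τ :=
      hsq.const_mul κa
    have hcomp : HasDerivAt g
        (-((2 * (κa * s) * erfcx (κa * s) - 2 / Real.sqrt π) * (κa * (1 / (2 * s) * (1 / D))))) τ := by
      have := ((hasDerivAt_erfcx (κa * Real.sqrt (τ / D))).comp τ hu).fun_neg
      simpa [Function.comp, hgdef, ← hs] using this
    convert hcomp using 1
    simp only [phi]
    rw [key τ hτ0, ← hs]
    have h2 : Real.sqrt π ≠ 0 := ne_of_gt hπ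
    field_simp
    ring
  have hpos : ∀ τ ∈ Set.Ioi (0:ℝ), 0 ≤ phi D κa τ := by
    intro τ hτ
    have hτ0 : 0 < τ := hτ
    set s := Real.sqrt (τ / D) with hs
    have hs0 : 0 < s := Real.sqrt_pos.mpr (div_pos hτ0 hD)
    have hb := erfcx_le (κa * s) (by positivity)
    have h2 := mul_le_mul_of_nonneg_left hb (by positivity : (0:ℝ) ≤ κa ^ 2 / D)
    have heq : κa ^ 2 / D * (Real.sqrt π * (κa * s))⁻¹ = κa / Real.sqrt (π * D * τ) := by
      rw [key τ hτ0, ← hs]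
      field_simp
    simp only [phi]
    rw [← hs, sub_nonneg]
    calc κa ^ 2 / D * erfcx (κa * s) ≤ κa ^ 2 / D * (Real.sqrt π * (κa * s))⁻¹ := h2
      _ = κa / Real.sqrt (π * D * τ) := heq
  have hu : Tendsto (fun τ : ℝ => κa * Real.sqrt (τ / D)) atTop atTop := by
    apply Tendsto.const_mul_atTop hκa
    exact _root_.tendsto_sqrt_atTop.comp (tendsto_id.atTop_div_const hD)
  have htends : Tendsto g atTop (𝓝 0) := by
    have := (tendsto_erfcx.comp hu).neg
    simpa [hgdef, Function.comp] using this
  have hg0 : g 0 = -1 := by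
    simp [hgdef, erfcx_zero]
  have hcont : ContinuousWithinAt g (Set.Ici 0) 0 := hgcont.continuousWithinAt
  refine ⟨integrableOn_Ioi_deriv_of_nonneg hcont hderiv hpos htends, ?_⟩
  rw [integral_Ioi_of_hasDerivAt_of_nonneg hcont hderiv hpos htends, hg0]
  norm_num
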